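/- Let F and G be nonzero bounded analytic functions on the half-plane {z ∈ ℂ : Re z > 2}. If there exists p ∈ ℕ with p ≥ 1 such that F(z)·G(z+p) = F(z+p)·G(z) for all z with Re z > 2, then there is a constant c ∈ ℂ with F = c·G on the half-plane. -/

import Mathlib

open Set Metric Filter Complex Finset Topology

section AuxLemmas

private lemma nsq' (x : ℂ) : ‖x‖ ^ 2 = Complex.normSq x := by
  rw [Complex.sq_norm]

private lemma one_sub_ne' {w : ℂ} (hw : ‖w‖ < 1) : (1:ℂ) - w ≠ 0 := by
  intro hcon
  rw [sub_eq_zero] at hcon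
  rw [← hcon] at hw
  simp at hw

private lemma den_ne' {b w : ℂ} (hb : ‖b‖ < 1) (hw : ‖w‖ < 1) :
    1 - (starRingEnd ℂ) b * w ≠ 0 := by
  apply one_sub_ne'
  rw [norm_mul, RCLike.norm_conj]
  nlinarith [norm_nonneg b, norm_nonneg w]

/-- zero divisors: analytic functions on a connected open set -/
private lemma analytic_zero_div' {S : Set ℂ} (hS : IsOpen S) (hSc : IsPreconnected S)
    {X Y : ℂ → ℂ} (hX : AnalyticOnNhd ℂ X S) (hY : AnalyticOnNhd ℂ Y S)
    (hXY : ∀ z ∈ S, X z * Y z = 0) {w : ℂ} (hw : w ∈ S) (hYw : Y w ≠ 0) :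
    ∀ z ∈ S, X z = 0 := by
  intro z hz
  by_contra hXz
  have hcont : ContinuousAt X z := (hX z hz).continuousAt
  have hev : ∀ᶠ z' in 𝓝 z, X z' ≠ 0 := hcont.eventually_ne hXz
  have hevS : ∀ᶠ z' in 𝓝 z, z' ∈ S := hS.mem_nhds hz
  have hY0 : Y =ᶠ[𝓝 z] 0 := by
    filter_upwards [hev, hevS] with z' h1 h2
    have := hXY z' h2
    simpa [h1] using (mul_eq_zero.1 this).resolve_left h1
  exact hYw (hY.eqOn_zero_of_preconnected_of_eventuallyEq_zero hSc hz hY0 hw)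

private lemma key_ineq' {b z : ℂ} {r : ℝ} (hb : ‖b‖ < r) (hr : r < 1) (hz : ‖z‖ = r) :
    ‖1 - (starRingEnd ℂ) b * z‖ * (r - ‖b‖) ≤ (1 - ‖b‖ * r) * ‖z - b‖ := by
  set β := ‖b‖ with hβ
  have hβ0 : 0 ≤ β := norm_nonneg b
  have hr0 : 0 < r := lt_of_le_of_lt hβ0 hb
  set t := (z * (starRingEnd ℂ) b).re with ht
  have htle : t ≤ β * r := by
    calc t ≤ ‖z * (starRingEnd ℂ) b‖ := Complex.re_le_norm _
    _ = r * β := by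
        rw [norm_mul, RCLike.norm_conj, hz]
    _ = β * r := mul_comm _ _
  have e1 : ‖z - b‖ ^ 2 = r ^ 2 + β ^ 2 - 2 * t := by
    rw [nsq', Complex.normSq_sub, ← nsq', ← nsq', hz, ht]
  have e2 : ‖1 - (starRingEnd ℂ) b * z‖ ^ 2 = 1 + β ^ 2 * r ^ 2 - 2 * t := by
    rw [nsq', Complex.normSq_sub, Complex.normSq_one, Complex.normSq_mul,
      Complex.normSq_conj, ← nsq', ← nsq', hz, one_mul]
    have hre : ((starRingEnd ℂ) ((starRingEnd ℂ) b * z)).re = t := by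
      rw [Complex.conj_re, ht, mul_comm]
    rw [hre]
  have hposR : 0 ≤ (1 - β * r) * ‖z - b‖ :=
    mul_nonneg (by nlinarith) (norm_nonneg _)
  have hsq : (‖1 - (starRingEnd ℂ) b * z‖ * (r - β)) ^ 2 ≤ ((1 - β * r) * ‖z - b‖) ^ 2 := by
    rw [mul_pow, mul_pow, e1, e2]
    nlinarith [sq_nonneg (1 - β * r), sq_nonneg (r - β), mul_nonneg (sub_nonneg.2 htle)
      (mul_nonneg (by nlinarith : (0:ℝ) ≤ 1 - β ^ 2) (by nlinarith : (0:ℝ) ≤ 1 - r ^ 2))]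
  exact le_of_pow_le_pow_left₀ two_ne_zero hposR hsq

private lemma blaschke_step' {f : ℂ → ℂ} {M : ℝ} (hf : DifferentiableOn ℂ f (ball (0:ℂ) 1))
    (hM : ∀ w ∈ ball (0:ℂ) 1, ‖f w‖ ≤ M) {b : ℂ} (hb : ‖b‖ < 1) (hfb : f b = 0) :
    ∃ h : ℂ → ℂ, DifferentiableOn ℂ h (ball (0:ℂ) 1) ∧ (∀ w ∈ ball (0:ℂ) 1, ‖h w‖ ≤ M) ∧
      ∀ w ∈ ball (0:ℂ) 1, f w = (w - b) / (1 - (starRingEnd ℂ) b * w) * h w := by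
  have hbmem : b ∈ ball (0:ℂ) 1 := mem_ball_zero_iff.2 hb
  have hds : DifferentiableOn ℂ (dslope f b) (ball (0:ℂ) 1) :=
    (Complex.differentiableOn_dslope (isOpen_ball.mem_nhds hbmem)).2 hf
  refine ⟨fun w => (1 - (starRingEnd ℂ) b * w) * dslope f b w, ?_, ?_, ?_⟩
  · exact (((differentiableOn_const _).sub ((differentiableOn_const _).mul
      differentiableOn_id)).mul hds)
  · intro w hw
    rw [mem_ball_zero_iff] at hw
    have hlim : Tendsto (fun r : ℝ => M * (1 - ‖b‖ * r) / (r - ‖b‖)) (𝓝[<] 1)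
        (𝓝 (M * (1 - ‖b‖ * 1) / (1 - ‖b‖))) := by
      apply Tendsto.mono_left _ nhdsWithin_le_nhds
      apply ContinuousAt.tendsto
      exact (continuousAt_const.mul (continuousAt_const.sub
        (continuousAt_const.mul continuousAt_id))).div
        (continuousAt_id.sub continuousAt_const) (by simpa using sub_ne_zero.2 hb.ne')
    have hev : ∀ᶠ r in 𝓝[<] (1:ℝ),
        ‖(1 - (starRingEnd ℂ) b * w) * dslope f b w‖ ≤ M * (1 - ‖b‖ * r) / (r - ‖b‖) := by
      have hmem : Ioo (max ‖b‖ ‖w‖) 1 ∈ 𝓝[<] (1:ℝ) :=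
        Ioo_mem_nhdsLT_of_mem ⟨max_lt hb hw, le_refl _⟩
      filter_upwards [hmem] with r hr
      obtain ⟨hr1, hr2⟩ := hr
      have hbr : ‖b‖ < r := lt_of_le_of_lt (le_max_left _ _) hr1
      have hwr : ‖w‖ < r := lt_of_le_of_lt (le_max_right _ _) hr1
      have hr0 : 0 < r := lt_of_le_of_lt (norm_nonneg b) hbr
      have hcl : closedBall (0:ℂ) r ⊆ ball (0:ℂ) 1 := closedBall_subset_ball (by linarith)
      refine Complex.norm_le_of_forall_mem_frontier_norm_le isBounded_ball
        ⟨(((differentiableOn_const _).sub ((differentiableOn_const _).mul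
            differentiableOn_id)).mul hds).mono (ball_subset_ball hr2.le),
         ((((differentiableOn_const _).sub ((differentiableOn_const _).mul
            differentiableOn_id)).mul hds).continuousOn).mono
            (by rw [closure_ball (0:ℂ) hr0.ne']; exact hcl)⟩
        (fun z hz => ?_) (subset_closure (mem_ball_zero_iff.2 hwr))
      rw [frontier_ball (0:ℂ) hr0.ne', mem_sphere_zero_iff_norm] at hz
      have hzb : z ≠ b := by intro h; rw [h] at hz; exact (ne_of_lt hbr) hz
      have hdse : dslope f b z = f z / (z - b) := by
        rw [dslope_of_ne f hzb, slope_def_field, hfb, sub_zero]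
      have hzball : z ∈ ball (0:ℂ) 1 := mem_ball_zero_iff.2 (by linarith [hz.le])
      have hMz := hM z hzball
      have hM0 : 0 ≤ M := le_trans (norm_nonneg _) hMz
      have hki := key_ineq' hbr hr2 hz
      have h1 : 0 < ‖z - b‖ := by
        rw [norm_pos_iff]; exact sub_ne_zero.2 hzb
      have h2 : (0:ℝ) < r - ‖b‖ := by linarith
      have hdiv : ‖1 - (starRingEnd ℂ) b * z‖ / ‖z - b‖ ≤ (1 - ‖b‖ * r) / (r - ‖b‖) :=
        (div_le_div_iff₀ h1 h2).2 hki
      show ‖(1 - (starRingEnd ℂ) b * z) * dslope f b z‖ ≤ _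
      rw [norm_mul, hdse, norm_div]
      calc ‖1 - (starRingEnd ℂ) b * z‖ * (‖f z‖ / ‖z - b‖)
          = ‖f z‖ * (‖1 - (starRingEnd ℂ) b * z‖ / ‖z - b‖) := by ring
        _ ≤ M * ((1 - ‖b‖ * r) / (r - ‖b‖)) :=
            mul_le_mul hMz hdiv (div_nonneg (norm_nonneg _) (norm_nonneg _)) hM0
        _ = M * (1 - ‖b‖ * r) / (r - ‖b‖) := (mul_div_assoc _ _ _).symm
    have := ge_of_tendsto hlim hev
    calc ‖_‖ ≤ M * (1 - ‖b‖ * 1) / (1 - ‖b‖) := this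
    _ = M := by
      rw [mul_one]
      exact mul_div_cancel_right₀ M (sub_ne_zero.2 hb.ne')
  · intro w hw
    rw [mem_ball_zero_iff] at hw
    have hfact : f w = (w - b) * dslope f b w := by
      have := sub_smul_dslope f b w
      rw [hfb, sub_zero] at this
      rw [← this]; simp [smul_eq_mul]
    rw [hfact]
    rw [div_mul_eq_mul_div, eq_div_iff (den_ne' hb hw)]
    ring

private lemma blaschke_bound' {f : ℂ → ℂ} {M : ℝ} (hf : DifferentiableOn ℂ f (ball (0:ℂ) 1))
    (hM : ∀ w ∈ ball (0:ℂ) 1, ‖f w‖ ≤ M) (b : ℕ → ℂ) (hb : ∀ n, ‖b n‖ < 1)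
    (hfb : ∀ n, f (b n) = 0) (hinj : Function.Injective b) :
    ∀ N, ∀ w ∈ ball (0:ℂ) 1,
      ‖f w‖ ≤ M * ∏ n ∈ Finset.range N, ‖(w - b n) / (1 - (starRingEnd ℂ) (b n) * w)‖ := by
  have main : ∀ N, ∃ h : ℂ → ℂ, DifferentiableOn ℂ h (ball (0:ℂ) 1) ∧
      (∀ w ∈ ball (0:ℂ) 1, ‖h w‖ ≤ M) ∧
      ∀ w ∈ ball (0:ℂ) 1,
        f w = (∏ n ∈ Finset.range N, (w - b n) / (1 - (starRingEnd ℂ) (b n) * w)) * h w := by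
    intro N
    induction N with
    | zero => exact ⟨f, hf, hM, fun w _ => by simp⟩
    | succ N ih =>
      obtain ⟨h, hdiff, hbound, hfact⟩ := ih
      have hmem : b N ∈ ball (0:ℂ) 1 := mem_ball_zero_iff.2 (hb N)
      have hP : (∏ n ∈ Finset.range N, (b N - b n) / (1 - (starRingEnd ℂ) (b n) * b N)) ≠ 0 := by
        apply Finset.prod_ne_zero_iff.2
        intro n hn
        have hne : b N ≠ b n := fun hh => (Finset.mem_range.1 hn).ne' (hinj hh)
        exact div_ne_zero (sub_ne_zero.2 hne) (den_ne' (hb n) (hb N))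
      have hhb : h (b N) = 0 := by
        have := hfact (b N) hmem
        rw [hfb N] at this
        exact (mul_eq_zero.1 this.symm).resolve_left hP
      obtain ⟨h', hdiff', hbound', hfact'⟩ := blaschke_step' hdiff hbound (hb N) hhb
      refine ⟨h', hdiff', hbound', fun w hw => ?_⟩
      rw [hfact w hw, hfact' w hw, Finset.prod_range_succ]
      ring
  intro N w hw
  obtain ⟨h, hdiff, hbound, hfact⟩ := main N
  rw [hfact w hw, norm_mul]
  have : ‖∏ n ∈ Finset.range N, (w - b n) / (1 - (starRingEnd ℂ) (b n) * w)‖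
      = ∏ n ∈ Finset.range N, ‖(w - b n) / (1 - (starRingEnd ℂ) (b n) * w)‖ :=
    norm_prod (Finset.range N) (fun n => (w - b n) / (1 - (starRingEnd ℂ) (b n) * w))
  rw [this]
  rw [mul_comm M _]
  exact mul_le_mul_of_nonneg_left (b := ‖h w‖) (c := M)
    (a := ∏ n ∈ Finset.range N, ‖(w - b n) / (1 - (starRingEnd ℂ) (b n) * w)‖)
    (hbound w hw)
    (Finset.prod_nonneg fun n _ => norm_nonneg ((w - b n) / (1 - (starRingEnd ℂ) (b n) * w)))

private lemma blas_le' {b w : ℂ} (hb : ‖b‖ < 1) (hw : ‖w‖ < 1) :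
    ‖(w - b) / (1 - (starRingEnd ℂ) b * w)‖ ≤
      Real.exp (-((1 - ‖w‖^2) * (1 - ‖b‖^2) / 4) / 2) := by
  set t := (w * (starRingEnd ℂ) b).re with ht
  have e1 : ‖w - b‖ ^ 2 = ‖w‖ ^ 2 + ‖b‖ ^ 2 - 2 * t := by
    rw [nsq', Complex.normSq_sub, ← nsq', ← nsq', ht]
  have e2 : ‖1 - (starRingEnd ℂ) b * w‖ ^ 2 = 1 + ‖b‖ ^ 2 * ‖w‖ ^ 2 - 2 * t := by
    rw [nsq', Complex.normSq_sub, Complex.normSq_one, Complex.normSq_mul,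
      Complex.normSq_conj, ← nsq', ← nsq', one_mul]
    have hre : ((starRingEnd ℂ) ((starRingEnd ℂ) b * w)).re = t := by
      rw [Complex.conj_re, ht, mul_comm]
    rw [hre]
  set Sq := (1 - ‖w‖^2) * (1 - ‖b‖^2) with hSq
  have hS0 : 0 ≤ Sq := mul_nonneg (by nlinarith [norm_nonneg w]) (by nlinarith [norm_nonneg b])
  have hiden : ‖1 - (starRingEnd ℂ) b * w‖ ^ 2 = ‖w - b‖ ^ 2 + Sq := by
    rw [e1, e2, hSq]; ring
  have hden : (0:ℝ) < ‖1 - (starRingEnd ℂ) b * w‖ ^ 2 := by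
    have := norm_pos_iff.2 (den_ne' hb hw)
    positivity
  have hden4 : ‖1 - (starRingEnd ℂ) b * w‖ ^ 2 ≤ 4 := by
    have h1 : ‖1 - (starRingEnd ℂ) b * w‖ ≤ 2 := by
      calc ‖1 - (starRingEnd ℂ) b * w‖ ≤ ‖(1:ℂ)‖ + ‖(starRingEnd ℂ) b * w‖ := norm_sub_le _ _
      _ ≤ 2 := by
          rw [norm_one, norm_mul, RCLike.norm_conj]
          nlinarith [norm_nonneg b, norm_nonneg w]
    nlinarith [norm_nonneg (1 - (starRingEnd ℂ) b * w)]
  have hq : ‖(w - b) / (1 - (starRingEnd ℂ) b * w)‖ ^ 2 ≤ 1 - Sq / 4 := by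
    rw [norm_div, div_pow, div_le_iff₀ hden]
    have : ‖w - b‖ ^ 2 = ‖1 - (starRingEnd ℂ) b * w‖ ^ 2 - Sq := by rw [hiden]; ring
    rw [this]
    nlinarith
  have hexp : 1 - Sq / 4 ≤ Real.exp (-(Sq/4)) := by
    have := Real.add_one_le_exp (-(Sq/4))
    linarith
  have hfin : ‖(w - b) / (1 - (starRingEnd ℂ) b * w)‖ ^ 2 ≤ (Real.exp (-(Sq/4)/2)) ^ 2 := by
    have he : (Real.exp (-(Sq/4)/2)) ^ 2 = Real.exp (-(Sq/4)) := by
      rw [sq, ← Real.exp_add]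
      ring_nf
    rw [he]
    calc ‖(w - b) / (1 - (starRingEnd ℂ) b * w)‖ ^ 2 ≤ 1 - Sq / 4 := hq
    _ ≤ Real.exp (-(Sq/4)) := hexp
  exact le_of_pow_le_pow_left₀ two_ne_zero (Real.exp_nonneg _) hfin

private lemma psi_mem' {w : ℂ} (hw : ‖w‖ < 1) : 2 < (2 + (1 + w)/(1 - w)).re := by
  have h1 : Complex.normSq w < 1 := by
    rw [← Complex.sq_norm]
    have h0 : (0:ℝ) ≤ ‖w‖ := norm_nonneg w
    have : ‖w‖ < 1 := hw
    nlinarith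
  have hw1 : (1:ℂ) - w ≠ 0 := one_sub_ne' hw
  have hns : 0 < Complex.normSq (1 - w) := Complex.normSq_pos.2 hw1
  have hre : ((1 + w)/(1 - w)).re = (1 - Complex.normSq w)/Complex.normSq (1 - w) := by
    rw [Complex.div_re, Complex.normSq_apply]
    simp only [Complex.add_re, Complex.add_im, Complex.sub_re, Complex.sub_im,
      Complex.one_re, Complex.one_im]
    rw [Complex.normSq_apply]
    ring
  rw [Complex.add_re, hre]
  have : 0 < (1 - Complex.normSq w)/Complex.normSq (1 - w) :=
    div_pos (by linarith) hns
  have h2 : ((2:ℂ)).re = 2 := by norm_num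
  rw [h2]
  linarith

private lemma mob_norm_lt' {z : ℂ} (hz : 2 < z.re) : ‖(z - 3) / (z - 1)‖ < 1 := by
  rw [norm_div]
  have h1 : 0 < ‖z - 1‖ := by
    rw [norm_pos_iff]
    intro hcon
    have := congrArg Complex.re hcon
    simp [Complex.sub_re] at this
    linarith
  rw [div_lt_one h1]
  have hsq : ‖z - 3‖ ^ 2 < ‖z - 1‖ ^ 2 := by
    rw [nsq', nsq', Complex.normSq_apply, Complex.normSq_apply]
    simp only [Complex.sub_re, Complex.sub_im]
    have h3 : ((3:ℂ)).re = 3 := by norm_num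
    have h3' : ((3:ℂ)).im = 0 := by norm_num
    have h1' : ((1:ℂ)).re = 1 := by norm_num
    have h1'' : ((1:ℂ)).im = 0 := by norm_num
    rw [h3, h3', h1', h1'']
    nlinarith
  nlinarith [norm_nonneg (z - 3), norm_nonneg (z - 1)]

private lemma mob_psi' {z : ℂ} (hz : 2 < z.re) :
    2 + (1 + (z - 3)/(z - 1))/(1 - (z - 3)/(z - 1)) = z := by
  have hz1 : z - 1 ≠ 0 := by
    intro hcon
    have := congrArg Complex.re hcon
    simp [Complex.sub_re] at this
    linarith
  have e1 : 1 - (z - 3)/(z - 1) = 2/(z - 1) := by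
    field_simp
    ring
  have e2 : 1 + (z - 3)/(z - 1) = (2*z - 4)/(z - 1) := by
    field_simp
    ring
  rw [e1, e2, div_div_div_cancel_right₀]
  · field_simp
    ring
  · exact hz1

private lemma one_sub_b_sq' {z : ℂ} (hz : 2 < z.re) :
    1 - ‖(z - 3)/(z - 1)‖ ^ 2 = (4*z.re - 8)/((z.re - 1)^2 + z.im^2) := by
  have hns : Complex.normSq (z - 1) = (z.re - 1)^2 + z.im^2 := by
    rw [Complex.normSq_apply]
    simp only [Complex.sub_re, Complex.sub_im, Complex.one_re, Complex.one_im]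
    ring
  have hns3 : Complex.normSq (z - 3) = (z.re - 3)^2 + z.im^2 := by
    rw [Complex.normSq_apply]
    have h3 : ((3:ℂ)).re = 3 := by norm_num
    have h3' : ((3:ℂ)).im = 0 := by norm_num
    simp only [Complex.sub_re, Complex.sub_im, h3, h3']
    ring
  have hpos : (0:ℝ) < (z.re - 1)^2 + z.im^2 := by nlinarith
  rw [norm_div, div_pow, nsq', nsq', hns, hns3]
  field_simp
  ring

private lemma hlow_aux' (x y pr : ℝ) (n : ℕ) (hx : 2 < x) (hp1 : 1 ≤ pr) :
    (4 * min (x-2) pr / ((x-1+pr)^2 + y^2)) * (1/((n:ℝ)+1)) ≤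
      (4*(x + (n:ℝ)*pr) - 8)/((x + (n:ℝ)*pr - 1)^2 + y^2) := by
  set m := min (x-2) pr with hm_def
  have hm : 0 < m := lt_min (by linarith) (by linarith)
  have hm1 : m ≤ x - 2 := min_le_left _ _
  have hm2 : m ≤ pr := min_le_right _ _
  set D := (x - 1 + pr)^2 + y^2 with hD_def
  have hD : 0 < D := by nlinarith
  set q := (n:ℝ)*pr with hq_def
  have hn0 : (0:ℝ) ≤ (n:ℝ) := Nat.cast_nonneg n
  have hq0 : 0 ≤ q := by positivity
  have hden_pos : (0:ℝ) < (x + q - 1)^2 + y^2 := by nlinarith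
  have hnum : 4*m*((n:ℝ)+1) ≤ 4*(x+q) - 8 := by nlinarith
  have hstep : x + q - 1 ≤ (x - 1 + pr)*((n:ℝ)+1) := by nlinarith
  have hden : (x + q - 1)^2 + y^2 ≤ D*((n:ℝ)+1)^2 := by
    have ha : 0 ≤ x + q - 1 := by linarith
    have h1 : (x+q-1)^2 ≤ ((x-1+pr)*((n:ℝ)+1))^2 := pow_le_pow_left₀ ha hstep 2
    have h2 : ((x-1+pr)*((n:ℝ)+1))^2 = (x-1+pr)^2*((n:ℝ)+1)^2 := mul_pow _ _ _
    have h3 : y^2 ≤ y^2*((n:ℝ)+1)^2 := by nlinarith [sq_nonneg y, sq_nonneg (n:ℝ)]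
    rw [hD_def]
    nlinarith
  rw [div_mul_div_comm, mul_one, div_le_div_iff₀ (by positivity) hden_pos]
  nlinarith [mul_le_mul_of_nonneg_left hden (by linarith : (0:ℝ) ≤ 4*m),
    mul_le_mul_of_nonneg_right hnum (by positivity : (0:ℝ) ≤ D*((n:ℝ)+1))]

end AuxLemmas

set_option maxHeartbeats 1000000

/-- If `F` and `G` are nonzero bounded analytic functions on `{Re z > 2}` and
`F(z)G(z+p) = F(z+p)G(z)` there for some positive integer `p`, then `F = c·G`. -/
theorem eq_const_mul_of_shift_relation (F G : ℂ → ℂ)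
    (hF : DifferentiableOn ℂ F {z : ℂ | 2 < z.re})
    (hG : DifferentiableOn ℂ G {z : ℂ | 2 < z.re})
    (hFb : ∃ M : ℝ, ∀ z : ℂ, 2 < z.re → ‖F z‖ ≤ M)
    (hGb : ∃ M : ℝ, ∀ z : ℂ, 2 < z.re → ‖G z‖ ≤ M)
    (hFne : ∃ z : ℂ, 2 < z.re ∧ F z ≠ 0)
    (hGne : ∃ z : ℂ, 2 < z.re ∧ G z ≠ 0)
    (p : ℕ) (hp : 1 ≤ p)
    (h : ∀ z : ℂ, 2 < z.re → F z * G (z + (p : ℂ)) = F (z + (p : ℂ)) * G z) :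
    ∃ c : ℂ, ∀ z : ℂ, 2 < z.re → F z = c * G z := by
  set S := {z : ℂ | 2 < z.re} with hSdef
  have hSopen : IsOpen S := isOpen_lt continuous_const Complex.continuous_re
  have hSconn : IsPreconnected S := (convex_halfSpace_re_gt 2).isPreconnected
  have hmem : ∀ z : ℂ, z ∈ S ↔ 2 < z.re := fun z => Iff.rfl
  have hmaps : ∀ m : ℕ, Set.MapsTo (fun z : ℂ => z + ((m : ℕ) : ℂ)) S S := by
    intro m z hz
    rw [hmem] at *
    rw [Complex.add_re, Complex.natCast_re]
    have : (0:ℝ) ≤ m := Nat.cast_nonneg m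
    linarith
  have hshift : ∀ (H : ℂ → ℂ), DifferentiableOn ℂ H S → ∀ m : ℕ,
      DifferentiableOn ℂ (fun z => H (z + ((m : ℕ) : ℂ))) S := fun H hH m =>
    hH.comp ((differentiable_id.add_const _).differentiableOn) (hmaps m)
  have nonzero_shift : ∀ (H : ℂ → ℂ), DifferentiableOn ℂ H S →
      (∃ z : ℂ, 2 < z.re ∧ H z ≠ 0) → ∀ m : ℕ, ∃ w ∈ S, H (w + ((m:ℕ):ℂ)) ≠ 0 := by
    intro H hH ⟨zw, hzw, hHzw⟩ m
    by_contra hc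
    push_neg at hc
    have hz₁ : ((3:ℂ) + ((m:ℕ):ℂ)) ∈ {z : ℂ | 2 + (m:ℝ) < z.re} := by
      simp only [mem_setOf_eq, Complex.add_re, Complex.natCast_re]
      norm_num
    have hev : H =ᶠ[𝓝 ((3:ℂ) + ((m:ℕ):ℂ))] 0 := by
      filter_upwards [(isOpen_lt continuous_const Complex.continuous_re).mem_nhds hz₁]
        with z' hz'
      have hz'' : z' - ((m:ℕ):ℂ) ∈ S := by
        rw [hmem, Complex.sub_re, Complex.natCast_re]
        have hz3 : 2 + (m:ℝ) < z'.re := hz'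
        linarith
      have := hc _ hz''
      simpa [sub_add_cancel] using this
    have h3S : ((3:ℂ) + ((m:ℕ):ℂ)) ∈ S := by
      rw [hmem, Complex.add_re, Complex.natCast_re]
      have h0 : (0:ℝ) ≤ m := Nat.cast_nonneg m
      have h3 : ((3:ℂ)).re = 3 := by norm_num
      rw [h3]
      linarith
    have := (hH.analyticOnNhd hSopen).eqOn_zero_of_preconnected_of_eventuallyEq_zero
      hSconn h3S hev
    exact hHzw (this (by rw [hmem]; exact hzw))
  -- the iterated shift relation
  have key : ∀ n : ℕ, ∀ z : ℂ, 2 < z.re →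
      F z * G (z + ((n * p : ℕ) : ℂ)) = F (z + ((n * p : ℕ) : ℂ)) * G z := by
    intro n
    induction n with
    | zero => intro z hz; simp
    | succ n ih =>
      have e : ∀ z : ℂ, z + (((n+1) * p : ℕ) : ℂ) = (z + ((n*p : ℕ):ℂ)) + (p:ℂ) := by
        intro z; push_cast; ring
      have hXa : AnalyticOnNhd ℂ
          (fun z => F z * G (z + (((n+1)*p : ℕ):ℂ)) - F (z + (((n+1)*p:ℕ):ℂ)) * G z) S :=
        ((hF.mul (hshift G hG ((n+1)*p))).sub
          ((hshift F hF ((n+1)*p)).mul hG)).analyticOnNhd hSopen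
      have hYa : AnalyticOnNhd ℂ (fun z => F (z + ((n*p:ℕ):ℂ)) * G (z + ((n*p:ℕ):ℂ))) S :=
        ((hshift F hF (n*p)).mul (hshift G hG (n*p))).analyticOnNhd hSopen
      have hpt : ∀ z ∈ S,
          (F z * G (z + (((n+1)*p:ℕ):ℂ)) - F (z + (((n+1)*p:ℕ):ℂ)) * G z) *
            (F (z + ((n*p:ℕ):ℂ)) * G (z + ((n*p:ℕ):ℂ))) = 0 := by
        intro z hz
        have h1 := ih z ((hmem z).1 hz)
        have h2 := h (z + ((n*p:ℕ):ℂ)) ((hmem _).1 (hmaps (n*p) hz))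
        rw [e z]
        linear_combination (F (z + ((n*p:ℕ):ℂ)) * G (z + ((n*p:ℕ):ℂ) + (p:ℂ))) * h1 +
          (F (z + ((n*p:ℕ):ℂ)) * G z) * h2
      obtain ⟨wF, hwFS, hwF⟩ := nonzero_shift F hF hFne (n*p)
      obtain ⟨wG, hwGS, hwG⟩ := nonzero_shift G hG hGne (n*p)
      have hCne : ∃ w ∈ S, F (w + ((n*p:ℕ):ℂ)) * G (w + ((n*p:ℕ):ℂ)) ≠ 0 := by
        by_contra hc
        push_neg at hc
        have := analytic_zero_div' hSopen hSconn
          ((hshift F hF (n*p)).analyticOnNhd hSopen)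
          ((hshift G hG (n*p)).analyticOnNhd hSopen) hc hwGS hwG
        exact hwF (this wF hwFS)
      obtain ⟨wC, hwCS, hwC⟩ := hCne
      intro z hz
      have := analytic_zero_div' hSopen hSconn hXa hYa hpt hwCS hwC z ((hmem z).2 hz)
      exact sub_eq_zero.1 this
  -- set up the constant and the difference function
  obtain ⟨z0, hz0, hGz0⟩ := hGne
  set c := F z0 / G z0 with hc
  refine ⟨c, ?_⟩
  obtain ⟨MF, hMF⟩ := hFb
  obtain ⟨MG, hMG⟩ := hGb
  set M := MF + ‖c‖ * MG with hM
  have hME : ∀ z : ℂ, 2 < z.re → ‖F z - c * G z‖ ≤ M := by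
    intro z hz
    calc ‖F z - c * G z‖ ≤ ‖F z‖ + ‖c * G z‖ := norm_sub_le _ _
    _ ≤ MF + ‖c‖ * MG := by
        rw [norm_mul]
        have := hMG z hz
        have := hMF z hz
        have := mul_le_mul_of_nonneg_left (hMG z hz) (norm_nonneg c)
        linarith
    _ = M := rfl
  have hEz : ∀ n : ℕ, F (z0 + ((n*p:ℕ):ℂ)) - c * G (z0 + ((n*p:ℕ):ℂ)) = 0 := by
    intro n
    have hk := key n z0 hz0
    rw [hc, div_mul_eq_mul_div, sub_eq_zero, eq_div_iff hGz0]
    linear_combination -hk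
  -- move to the unit disc
  set zs : ℕ → ℂ := fun n => z0 + ((n*p:ℕ):ℂ) with hzs
  have hzsS : ∀ n, 2 < (zs n).re := by
    intro n
    rw [hzs]
    simp only [Complex.add_re, Complex.natCast_re]
    have : (0:ℝ) ≤ ((n*p:ℕ):ℝ) := Nat.cast_nonneg _
    linarith
  set b : ℕ → ℂ := fun n => (zs n - 3)/(zs n - 1) with hb
  have hbn : ∀ n, ‖b n‖ < 1 := fun n => mob_norm_lt' (hzsS n)
  have hψb : ∀ n, 2 + (1 + b n)/(1 - b n) = zs n := fun n => mob_psi' (hzsS n)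
  have hbinj : Function.Injective b := by
    intro m n hmn
    have hzz : zs m = zs n := by
      rw [← hψb m, ← hψb n, hmn]
    have h1 : ((m*p:ℕ):ℂ) = ((n*p:ℕ):ℂ) := by
      have := hzz
      rw [hzs] at this
      exact add_left_cancel this
    have h2 : m * p = n * p := Nat.cast_inj.1 h1
    exact Nat.eq_of_mul_eq_mul_right (Nat.lt_of_lt_of_le Nat.zero_lt_one hp) h2
  -- the function on the disc
  set f : ℂ → ℂ := fun w =>
    F (2 + (1 + w)/(1 - w)) - c * G (2 + (1 + w)/(1 - w)) with hf_def
  have hψdiff : DifferentiableOn ℂ (fun w : ℂ => 2 + (1 + w)/(1 - w)) (ball (0:ℂ) 1) := by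
    apply (differentiableOn_const _).add
    apply DifferentiableOn.div
    · exact (differentiableOn_const _).add differentiableOn_id
    · exact (differentiableOn_const _).sub differentiableOn_id
    · intro w hw
      exact one_sub_ne' (mem_ball_zero_iff.1 hw)
  have hEdiff : DifferentiableOn ℂ (fun z => F z - c * G z) S :=
    hF.sub ((differentiableOn_const c).mul hG)
  have hfdiff : DifferentiableOn ℂ f (ball (0:ℂ) 1) := by
    apply hEdiff.comp hψdiff
    intro w hw
    exact psi_mem' (mem_ball_zero_iff.1 hw)
  have hfM : ∀ w ∈ ball (0:ℂ) 1, ‖f w‖ ≤ M := by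
    intro w hw
    exact hME _ (psi_mem' (mem_ball_zero_iff.1 hw))
  have hfb : ∀ n, f (b n) = 0 := by
    intro n
    rw [hf_def]
    simp only
    rw [hψb n]
    exact hEz n
  have hbnd := blaschke_bound' hfdiff hfM b hbn hfb hbinj
  -- the quantitative estimate
  intro z hz
  set w : ℂ := (z - 3)/(z - 1) with hw_def
  have hwb : ‖w‖ < 1 := mob_norm_lt' hz
  have hwψ : 2 + (1 + w)/(1 - w) = z := mob_psi' hz
  have hfwz : f w = F z - c * G z := by
    rw [hf_def]
    simp only
    rw [hwψ]
  -- constants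
  set x := z0.re with hx_def
  set y := z0.im with hy_def
  have hx : 2 < x := hz0
  have hp1 : (1:ℝ) ≤ (p:ℝ) := by exact_mod_cast hp
  set m := min (x - 2) (p:ℝ) with hm_def
  have hm : 0 < m := lt_min (by linarith) (by linarith)
  set D := (x - 1 + p)^2 + y^2 with hD_def
  have hD : 0 < D := by nlinarith
  -- lower bound for 1 - ‖b n‖²
  have hlow : ∀ n : ℕ, (4*m/D) * (1/((n:ℝ)+1)) ≤ 1 - ‖b n‖^2 := by
    intro n
    have hre : (zs n).re = x + ((n*p:ℕ):ℝ) := by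
      rw [hzs]
      simp [Complex.add_re, Complex.natCast_re]
      rfl
    have him : (zs n).im = y := by
      rw [hzs]
      simp [Complex.add_im, Complex.natCast_im]
      rfl
    have hq : ((n*p:ℕ):ℝ) = (n:ℝ)*(p:ℝ) := by push_cast; ring
    have heq := one_sub_b_sq' (hzsS n)
    rw [hre, him, hq] at heq
    rw [hb]
    simp only
    rw [heq, hm_def, hD_def]
    exact hlow_aux' x y (p:ℝ) n hx hp1
  -- per-factor exponential bound
  set κ := (1 - ‖w‖^2) * m / D with hκ_def
  have hκ : 0 < κ := by
    have : 0 < 1 - ‖w‖^2 := by nlinarith [norm_nonneg w]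
    positivity
  have hfac : ∀ n : ℕ, ‖(w - b n) / (1 - (starRingEnd ℂ) (b n) * w)‖ ≤
      Real.exp (-((κ/2) * (1/((n:ℝ)+1)))) := by
    intro n
    calc ‖(w - b n) / (1 - (starRingEnd ℂ) (b n) * w)‖
        ≤ Real.exp (-((1 - ‖w‖^2) * (1 - ‖b n‖^2) / 4) / 2) := blas_le' (hbn n) hwb
      _ ≤ Real.exp (-((κ/2) * (1/((n:ℝ)+1)))) := by
          apply Real.exp_le_exp.2
          have hl := hlow n
          have hw1 : 0 ≤ 1 - ‖w‖^2 := by nlinarith [norm_nonneg w]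
          have hmul := mul_le_mul_of_nonneg_left hl hw1
          have h4 : 4*(κ*(1/((n:ℝ)+1))) ≤ (1-‖w‖^2)*(1-‖b n‖^2) := by
            calc 4*(κ*(1/((n:ℝ)+1)))
                = (1-‖w‖^2)*((4*m/D)*(1/((n:ℝ)+1))) := by
                  rw [hκ_def]
                  field_simp
              _ ≤ (1-‖w‖^2)*(1-‖b n‖^2) := hmul
          linarith
  -- sum up
  have hHtend := Real.tendsto_sum_range_one_div_nat_succ_atTop
  have hbound : ∀ N : ℕ, ‖f w‖ ≤
      M * Real.exp (-((κ/2) * (∑ i ∈ Finset.range N, (1 / ((i:ℝ) + 1))))) := by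
    intro N
    have h1 := hbnd N w (mem_ball_zero_iff.2 hwb)
    have hM0 : 0 ≤ M := le_trans (norm_nonneg _) (hME z0 hz0)
    have h2 : ∏ n ∈ Finset.range N, ‖(w - b n) / (1 - (starRingEnd ℂ) (b n) * w)‖ ≤
        ∏ n ∈ Finset.range N, Real.exp (-((κ/2) * (1/((n:ℝ)+1)))) := by
      apply Finset.prod_le_prod
      · intro n _; exact norm_nonneg _
      · intro n _; exact hfac n
    have h3 : ∏ n ∈ Finset.range N, Real.exp (-((κ/2) * (1/((n:ℝ)+1)))) =
        Real.exp (-((κ/2) * (∑ i ∈ Finset.range N, (1 / ((i:ℝ) + 1))))) := by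
      rw [← Real.exp_sum]
      congr 1
      rw [Finset.mul_sum, ← Finset.sum_neg_distrib]
    calc ‖f w‖ ≤ M * ∏ n ∈ Finset.range N, ‖(w - b n) / (1 - (starRingEnd ℂ) (b n) * w)‖ := h1
    _ ≤ M * ∏ n ∈ Finset.range N, Real.exp (-((κ/2) * (1/((n:ℝ)+1)))) :=
        mul_le_mul_of_nonneg_left h2 hM0
    _ = M * Real.exp (-((κ/2) * (∑ i ∈ Finset.range N, (1 / ((i:ℝ) + 1))))) := by rw [h3]
  have htend : Tendsto (fun N : ℕ =>
      M * Real.exp (-((κ/2) * (∑ i ∈ Finset.range N, (1 / ((i:ℝ) + 1)))))) atTop (𝓝 0) := by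
    have T1 : Tendsto (fun N : ℕ => (κ/2) * (∑ i ∈ Finset.range N, (1 / ((i:ℝ) + 1))))
        atTop atTop := hHtend.const_mul_atTop (by positivity)
    have T2 : Tendsto (fun N : ℕ => -((κ/2) * (∑ i ∈ Finset.range N, (1 / ((i:ℝ) + 1)))))
        atTop atBot := tendsto_neg_atTop_atBot.comp T1
    have T3 : Tendsto (fun N : ℕ =>
        Real.exp (-((κ/2) * (∑ i ∈ Finset.range N, (1 / ((i:ℝ) + 1)))))) atTop (𝓝 0) :=
      Real.tendsto_exp_atBot.comp T2
    have T4 := T3.const_mul M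
    rw [mul_zero] at T4
    exact T4
  have hfw0 : ‖f w‖ ≤ 0 := ge_of_tendsto htend (Eventually.of_forall hbound)
  have : f w = 0 := norm_le_zero_iff.1 hfw0
  rw [hfwz] at this
  exact sub_eq_zero.1 this
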